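/- The Krull dimension of the ring k[x_1,…,x_m, y_1,…,y_m]/Ī_m equals m. (Chart-level form of the statement that the special fiber of the splitting model M^spl_I is equidimensional of dimension n − 1; the transverse chart factor has relative dimension m = n − 2ℓ.) -/

import Mathlib

/-!
STATEMENT 5: The Krull dimension of `k[x₁,…,xₘ,y₁,…,yₘ]/Ī_m` equals `m` (the special fiber of
the transverse chart factor of the splitting model has dimension `m = n − 2ℓ`).
-/

open MvPolynomial

/-- The `x`-variables. -/
noncomputable def xVar {m : ℕ} (k : Type*) [CommRing k] (i : Fin m) :
    MvPolynomial (Fin m ⊕ Fin m) k := X (Sum.inl i)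

/-- The `y`-variables. -/
noncomputable def yVar {m : ℕ} (k : Type*) [CommRing k] (i : Fin m) :
    MvPolynomial (Fin m ⊕ Fin m) k := X (Sum.inr i)

/-- The ideal `Ī_m`, generated by the 2×2 minors `xᵢyⱼ − xⱼyᵢ` for `i < j` together with
`Σ_{i=1}^m xᵢ y_{m+1−i}`  (here `Fin.rev` realizes `i ↦ m+1−i` in 0-indexing). -/
noncomputable def specialChartIdeal (k : Type*) [CommRing k] (m : ℕ) :
    Ideal (MvPolynomial (Fin m ⊕ Fin m) k) :=
  Ideal.span
    ({p | ∃ i j : Fin m, i < j ∧ p = xVar k i * yVar k j - xVar k j * yVar k i} ∪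
      {∑ i : Fin m, xVar k i * yVar k i.rev})

section Auxiliary

variable {k : Type*} [Field k]

/-- `NoIndep k A n` : there is no algebraically independent family of size `n` in `A` over `k`. -/
def NoIndep (k : Type*) [Field k] (A : Type*) [CommRing A] [Algebra k A] (n : ℕ) : Prop :=
  ∀ f : Fin n → A, ¬ AlgebraicIndependent k f

section Growth

variable {F : Type*} [Field F] [Algebra k F]

private lemma card_le_of_span {ι : Type*} [Fintype ι] {v : ι → F}
    (hv : LinearIndependent k v) (s : Finset F)
    (hs : ∀ i, v i ∈ Submodule.span k (s : Set F)) :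
    Fintype.card ι ≤ s.card := by
  classical
  have h2 : LinearIndependent k
      (fun i => (⟨v i, hs i⟩ : Submodule.span k (s : Set F))) := by
    apply LinearIndependent.of_comp (Submodule.span k (s : Set F)).subtype
    convert hv
    rfl
  calc Fintype.card ι ≤ Module.finrank k (Submodule.span k (s : Set F)) :=
        h2.fintype_card_le_finrank
    _ ≤ s.card := finrank_span_finset_le_card s

/-- Monomials in an algebraically independent family are linearly independent. -/
private lemma linIndep_monomials {n : ℕ} {u : Fin n → F}
    (hu : AlgebraicIndependent k u) (N : ℕ) (c : F) (hc : c ≠ 0) :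
    LinearIndependent k (fun α : Fin n → Fin (N + 1) =>
      c * ∏ i, u i ^ (α i : ℕ)) := by
  classical
  have hbasis : LinearIndependent k
      (fun s : Fin n →₀ ℕ => (monomial s (1 : k) : MvPolynomial (Fin n) k)) := by
    have := (MvPolynomial.basisMonomials (Fin n) k).linearIndependent
    rwa [MvPolynomial.coe_basisMonomials] at this
  set L : MvPolynomial (Fin n) k →ₗ[k] F :=
    (LinearMap.mulLeft k c).comp (MvPolynomial.aeval u).toLinearMap with hL
  have hLinj : Function.Injective L := by
    apply Function.Injective.comp (g := (LinearMap.mulLeft k c : F →ₗ[k] F))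
    · exact fun a b hab => mul_left_cancel₀ hc hab
    · exact algebraicIndependent_iff_injective_aeval.mp hu
  have hinj : Function.Injective
      (fun α : Fin n → Fin (N+1) => Finsupp.equivFunOnFinite.symm
        (fun i => (α i : ℕ))) := by
    intro a b hab
    have := Finsupp.equivFunOnFinite.symm.injective hab
    funext i
    exact Fin.val_injective (congrFun this i)
  have h3 : LinearIndependent k (fun α : Fin n → Fin (N+1) =>
      L (monomial (Finsupp.equivFunOnFinite.symm fun i => (α i : ℕ)) (1 : k))) :=
    ((hbasis.comp _ hinj).map' L (LinearMap.ker_eq_bot.mpr hLinj))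
  convert h3 using 2 with α
  rw [hL]
  simp only [LinearMap.coe_comp, Function.comp_apply, AlgHom.toLinearMap_apply,
    LinearMap.mulLeft_apply]
  rw [aeval_monomial, map_one, one_mul]
  congr 1
  rw [Finsupp.prod_pow]
  congr 1


/-- A field element family of size `n+1` contained in a "localized" subalgebra generated by
`n` elements cannot be algebraically independent: a growth (Hilbert-function) argument. -/
private lemma not_algIndep_of_gen {n : ℕ} (t : Fin n → F) (b : F) (hb : b ≠ 0)
    (hbA : b ∈ Algebra.adjoin k (Set.range t)) (u : Fin (n + 1) → F)
    (hu : ∀ i, ∃ d : ℕ, b ^ d * u i ∈ Algebra.adjoin k (Set.range t)) :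
    ¬ AlgebraicIndependent k u := by
  classical
  intro hind
  rw [Algebra.adjoin_range_eq_range_aeval, AlgHom.mem_range] at hbA
  obtain ⟨Q, hQ⟩ := hbA
  simp only [Algebra.adjoin_range_eq_range_aeval, AlgHom.mem_range] at hu
  choose d P hP using hu
  -- degree/exponent constants
  set dS : ℕ := ∑ i, d i with hdS
  set CP : ℕ := ∑ i, (P i).totalDegree with hCP
  set c₀ : ℕ := dS * Q.totalDegree + CP with hc₀
  set N : ℕ := (c₀ + 1) ^ n with hN
  set E : ℕ := dS * N with hE
  set D : ℕ := c₀ * N with hD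
  -- the exponent sum
  have key : ∀ α : Fin (n+1) → Fin (N+1),
      ∃ R : MvPolynomial (Fin n) k, R.totalDegree ≤ D ∧
        aeval t R = b ^ E * ∏ i, u i ^ (α i : ℕ) := by
    intro α
    set e : ℕ := ∑ i, d i * (α i : ℕ) with he
    have heE : e ≤ E := by
      rw [he, hE, hdS, Finset.sum_mul]
      apply Finset.sum_le_sum
      intro i _
      exact Nat.mul_le_mul le_rfl (Nat.le_of_lt_succ (α i).isLt)
    refine ⟨Q ^ (E - e) * ∏ i, (P i) ^ (α i : ℕ), ?_, ?_⟩
    · calc (Q ^ (E - e) * ∏ i, (P i) ^ (α i : ℕ)).totalDegree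
          ≤ (Q ^ (E - e)).totalDegree + (∏ i, (P i) ^ (α i : ℕ)).totalDegree :=
            totalDegree_mul _ _
        _ ≤ (E - e) * Q.totalDegree + ∑ i, ((P i) ^ (α i : ℕ)).totalDegree := by
            gcongr
            · exact totalDegree_pow _ _
            · exact totalDegree_finset_prod _ _
        _ ≤ E * Q.totalDegree + ∑ i, N * (P i).totalDegree := by
            gcongr with i
            · omega
            · exact (totalDegree_pow _ _).trans
                (Nat.mul_le_mul_right _ (Nat.le_of_lt_succ (α i).isLt))
        _ ≤ D := by
            rw [hD, hc₀, hE, ← Finset.mul_sum, ← hCP]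
            nlinarith [Nat.zero_le N]
    · rw [map_mul, map_pow, map_prod, hQ]
      have : ∀ i ∈ Finset.univ, (aeval t) (P i ^ (α i : ℕ))
          = (b ^ d i * u i) ^ (α i : ℕ) := by
        intro i _
        rw [map_pow, hP]
      rw [Finset.prod_congr rfl this]
      have expand : ∏ i, (b ^ d i * u i) ^ (α i : ℕ)
          = b ^ e * ∏ i, u i ^ (α i : ℕ) := by
        rw [he]
        rw [Finset.prod_congr rfl (fun i _ => mul_pow (b ^ d i) (u i) (α i : ℕ))]
        rw [Finset.prod_mul_distrib]
        congr 1
        rw [Finset.prod_congr rfl (fun i _ => (pow_mul b (d i) ((α i : ℕ))).symm)]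
        rw [Finset.prod_pow_eq_pow_sum]
      rw [expand, ← mul_assoc, ← pow_add, Nat.sub_add_cancel heE]
  -- the spanning finset
  set s : Finset F := Finset.image
    (fun β : Fin n → Fin (D + 1) => ∏ i, t i ^ (β i : ℕ)) Finset.univ with hs
  have hmem : ∀ α : Fin (n+1) → Fin (N+1),
      b ^ E * ∏ i, u i ^ (α i : ℕ) ∈ Submodule.span k (s : Set F) := by
    intro α
    obtain ⟨R, hRdeg, hRval⟩ := key α
    rw [← hRval]
    rw [aeval_def, eval₂_eq']
    apply Submodule.sum_mem
    intro v hv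
    rw [← Algebra.smul_def]
    apply Submodule.smul_mem
    apply Submodule.subset_span
    have hvle : ∀ i, v i ≤ D := by
      intro i
      have h1 : v i ≤ v.sum fun _ e => e := by
        by_cases hvi : v i = 0
        · simp [hvi]
        · rw [Finsupp.sum]
          exact Finset.single_le_sum (f := fun j => v j) (fun _ _ => Nat.zero_le _)
            (Finsupp.mem_support_iff.mpr hvi)
      exact h1.trans ((le_totalDegree hv).trans hRdeg)
    refine Finset.mem_coe.mpr (Finset.mem_image.mpr ⟨fun i => ⟨v i, Nat.lt_succ_of_le (hvle i)⟩,
      Finset.mem_univ _, rfl⟩)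
  -- linear independence and counting
  have hli := linIndep_monomials hind N (b ^ E) (pow_ne_zero _ hb)
  have hcount := card_le_of_span hli s (fun α => hmem α)
  rw [Fintype.card_fun, Fintype.card_fin, Fintype.card_fin] at hcount
  have hscard : s.card ≤ (D + 1) ^ n := by
    calc s.card ≤ (Finset.univ : Finset (Fin n → Fin (D+1))).card := Finset.card_image_le
      _ = (D + 1) ^ n := by rw [Finset.card_univ, Fintype.card_fun, Fintype.card_fin,
            Fintype.card_fin]
  -- numeric contradiction
  have h1 : D + 1 ≤ (c₀ + 1) * (N + 1) := by rw [hD]; nlinarith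
  have h2 : (N + 1) ^ (n + 1) ≤ (D + 1) ^ n := hcount.trans hscard
  have h3 : (D + 1) ^ n ≤ ((c₀ + 1) * (N + 1)) ^ n := Nat.pow_le_pow_left h1 n
  have h4 : ((c₀ + 1) * (N + 1)) ^ n = N * (N + 1) ^ n := by
    rw [mul_pow, ← hN]
  have h5 : N * (N + 1) ^ n < (N + 1) ^ (n + 1) := by
    rw [pow_succ]
    have hX : 0 < (N + 1) ^ n := Nat.pow_pos (Nat.succ_pos N)
    nlinarith
  omega

end Growth

lemma noIndep_of_algEquiv {A B : Type*} [CommRing A] [Algebra k A] [CommRing B] [Algebra k B]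
    (e : A ≃ₐ[k] B) {n : ℕ} (h : NoIndep k A n) : NoIndep k B n := by
  intro f hf
  exact h (e.symm ∘ f) (hf.map' (f := e.symm.toAlgHom) e.symm.injective)

/-- Quotienting a domain by a nonzero prime strictly decreases the size of possible
algebraically independent families. -/
lemma NoIndep.quotient {A : Type*} [CommRing A] [IsDomain A] [Algebra k A]
    (p : Ideal A) [p.IsPrime] (hp : p ≠ ⊥) {d : ℕ}
    (h : NoIndep k A (d + 1)) : NoIndep k (A ⧸ p) d := by
  classical
  intro f hf
  obtain ⟨a, hap, ha0⟩ := Submodule.exists_mem_ne_zero_of_ne_bot hp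
  -- lift f
  have hsurj := Ideal.Quotient.mk_surjective (I := p)
  choose g hg using fun i => hsurj (f i)
  have hcomp : (Ideal.Quotient.mkₐ k p) ∘ g = f := funext fun i => hg i
  have hgind : AlgebraicIndependent k g :=
    AlgebraicIndependent.of_comp (Ideal.Quotient.mkₐ k p) (by rw [hcomp]; exact hf)
  -- a is transcendental over the adjoin of g
  have keypoly : ∀ (n : ℕ) (q : Polynomial A), q.natDegree ≤ n →
      (∀ i, q.coeff i ∈ Algebra.adjoin k (Set.range g)) → Polynomial.eval a q = 0 →
      q = 0 := by
    intro n
    induction n with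
    | zero =>
      intro q hdeg _ heval
      rw [Polynomial.eq_C_of_natDegree_le_zero hdeg] at heval ⊢
      rw [Polynomial.eval_C] at heval
      rw [heval, map_zero]
    | succ n ih =>
      intro q hdeg hcoeff heval
      -- the constant coefficient lies in p
      have hc0p : q.coeff 0 ∈ p := by
        have hsum := Polynomial.eval_eq_sum_range (x := a) (p := q)
        rw [heval] at hsum
        rw [Finset.sum_range_succ'] at hsum
        simp only [pow_zero, mul_one] at hsum
        have hterm : ∑ i ∈ Finset.range q.natDegree, q.coeff (i + 1) * a ^ (i + 1) ∈ p := by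
          apply Ideal.sum_mem
          intro i _
          rw [pow_succ, ← mul_assoc]
          exact Ideal.mul_mem_left p _ hap
        have h0 : q.coeff 0 = -(∑ i ∈ Finset.range q.natDegree, q.coeff (i + 1) * a ^ (i + 1)) :=
          eq_neg_of_add_eq_zero_right hsum.symm
        rw [h0]
        exact neg_mem hterm
      -- hence it is zero
      have hc00 : q.coeff 0 = 0 := by
        have hmem := hcoeff 0
        rw [Algebra.adjoin_range_eq_range_aeval, AlgHom.mem_range] at hmem
        obtain ⟨Q0, hQ0⟩ := hmem
        have h1 : aeval f Q0 = 0 := by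
          rw [← hcomp]
          rw [show (⇑(Ideal.Quotient.mkₐ k p) ∘ g) = fun i => (Ideal.Quotient.mkₐ k p) (g i)
            from rfl]
          rw [← comp_aeval_apply, hQ0, Ideal.Quotient.mkₐ_eq_mk]
          exact Ideal.Quotient.eq_zero_iff_mem.mpr hc0p
        have hQ00 : Q0 = 0 := hf.eq_zero_of_aeval_eq_zero _ h1
        rw [hQ00, map_zero] at hQ0
        exact hQ0.symm
      -- so q = X * q.divX
      have hqX : q = Polynomial.X * q.divX := by
        conv_lhs => rw [← Polynomial.X_mul_divX_add (p := q)]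
        rw [hc00, map_zero, add_zero]
      have hdiv0 : Polynomial.eval a q.divX = 0 := by
        have h2 : Polynomial.eval a (Polynomial.X * q.divX) = 0 := by rw [← hqX]; exact heval
        rw [Polynomial.eval_mul, Polynomial.eval_X] at h2
        rcases mul_eq_zero.mp h2 with h | h
        · exact absurd h ha0
        · exact h
      have hdivdeg : q.divX.natDegree ≤ n := by
        have := Polynomial.natDegree_divX_eq_natDegree_tsub_one (p := q)
        omega
      have hdivcoeff : ∀ i, q.divX.coeff i ∈ Algebra.adjoin k (Set.range g) := by
        intro i
        rw [Polynomial.coeff_divX]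
        exact hcoeff (i + 1)
      have := ih q.divX hdivdeg hdivcoeff hdiv0
      rw [hqX, this, mul_zero]
  have htrans : Transcendental (Algebra.adjoin k (Set.range g)) a := by
    rintro ⟨q, hq0, hqeval⟩
    apply hq0
    set q' : Polynomial A := q.map (algebraMap (Algebra.adjoin k (Set.range g)) A) with hq'
    have hq'eval : Polynomial.eval a q' = 0 := by
      rw [hq', Polynomial.eval_map, ← Polynomial.aeval_def]
      exact hqeval
    have hq'coeff : ∀ i, q'.coeff i ∈ Algebra.adjoin k (Set.range g) := by
      intro i
      rw [hq', Polynomial.coeff_map]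
      exact (q.coeff i).2
    have hq'0 : q' = 0 := keypoly q'.natDegree q' le_rfl hq'coeff hq'eval
    rw [hq'] at hq'0
    exact Polynomial.map_injective _ Subtype.coe_injective (by rw [hq'0, Polynomial.map_zero])
  have hopt : AlgebraicIndependent k (fun o : Option (Fin d) => o.elim a g) :=
    (hgind.option_iff_transcendental a).mpr htrans
  exact h _ ((algebraicIndependent_equiv (finSuccEquiv d)).mpr hopt)


lemma NoIndep.not_zero {A : Type*} [CommRing A] [Nontrivial A] [Algebra k A]
    (h : NoIndep k A 0) : False := by
  apply h (fun i => 0)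
  haveI : IsEmpty (Fin 0) := by infer_instance
  rw [algebraicIndependent_empty_type_iff]
  exact (algebraMap k A).injective

lemma chain_le : ∀ (r : ℕ) {d : ℕ} (A : Type*) [CommRing A] [Algebra k A]
    (p : Fin (r + 1) → Ideal A), (∀ j, (p j).IsPrime) → StrictMono p →
    NoIndep k (A ⧸ p 0) (d + 1) → r ≤ d := by
  intro r
  induction r with
  | zero => intro d A _ _ p _ _ _; exact Nat.zero_le d
  | succ r ih =>
    intro d A _ _ p hprime hmono hno
    haveI := hprime 0
    haveI := hprime 1
    haveI : IsDomain (A ⧸ p 0) := Ideal.Quotient.isDomain (p 0)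
    have h01 : p 0 < p 1 := hmono (by
      show (0 : Fin (r + 2)) < 1
      simp [Fin.lt_def])
    set q : Ideal (A ⧸ p 0) := (p 1).map (Ideal.Quotient.mk (p 0)) with hq
    have hker : RingHom.ker (Ideal.Quotient.mk (p 0)) ≤ p 1 := by
      rw [Ideal.mk_ker]; exact le_of_lt h01
    haveI hqprime : q.IsPrime :=
      Ideal.map_isPrime_of_surjective Ideal.Quotient.mk_surjective hker
    have hqne : q ≠ ⊥ := by
      obtain ⟨a, ha1, ha0⟩ := SetLike.exists_of_lt h01
      intro hbot
      have : Ideal.Quotient.mk (p 0) a ∈ q := Ideal.mem_map_of_mem _ ha1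
      rw [hbot, Ideal.mem_bot, Ideal.Quotient.eq_zero_iff_mem] at this
      exact ha0 this
    have hno2 : NoIndep k ((A ⧸ p 0) ⧸ q) d := hno.quotient q hqne
    -- identify with A ⧸ p 1
    have heq : ((p 1).map (Ideal.Quotient.mkₐ k (p 0))) = q := rfl
    have e : ((A ⧸ p 0) ⧸ q) ≃ₐ[k] A ⧸ p 1 := by
      rw [← heq]
      exact DoubleQuot.quotQuotEquivQuotOfLEₐ k (le_of_lt h01)
    have hno3 : NoIndep k (A ⧸ p 1) d := noIndep_of_algEquiv e hno2
    cases d with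
    | zero =>
      haveI : Nontrivial (A ⧸ p 1) := Ideal.Quotient.nontrivial_iff.mpr (hprime 1).ne_top
      exact absurd hno3 (fun h => h.not_zero)
    | succ d' =>
      have hr : r ≤ d' := by
        apply ih A (p ∘ Fin.succ) (fun j => hprime _) (hmono.comp Fin.strictMono_succ)
        exact hno3
      omega

/-- Upper bound on Krull dimension from bounds on algebraically independent families
in all prime quotients. -/
lemma ringKrullDim_le_of_noIndep {A : Type*} [CommRing A] [Algebra k A] (d : ℕ)
    (H : ∀ (P : Ideal A), P.IsPrime → NoIndep k (A ⧸ P) (d + 1)) :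
    ringKrullDim A ≤ (d : ℕ) := by
  rw [ringKrullDim, Order.krullDim]
  apply iSup_le
  intro c
  have : c.length ≤ d := by
    apply chain_le (k := k) c.length A (fun j => (c j).asIdeal) (fun j => (c j).isPrime)
    · intro i j hij
      exact c.strictMono hij
    · exact H _ (c 0).isPrime
  exact_mod_cast WithBot.coe_le_coe.mpr (by exact_mod_cast this)

/-- Abstract form of the key lemma: a domain generated by `x₁..xₘ, y₁..yₘ` satisfying the
minor relations and the extra quadratic relation admits no algebraically independent family
of size `m + 1` (where `m = m' + 3`). -/
lemma key_aux (hchar : (2 : k) ≠ 0) {m' : ℕ} {D : Type*} [CommRing D] [IsDomain D]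
    [Algebra k D] (xb yb : Fin (m' + 3) → D)
    (hgen : ∀ z : D, ∃ U : MvPolynomial (Fin (m' + 3) ⊕ Fin (m' + 3)) k,
      aeval (Sum.elim xb yb) U = z)
    (rel1 : ∀ i j, xb i * yb j = xb j * yb i)
    (rel2 : ∑ i, xb i * yb i.rev = 0) :
    NoIndep k D (m' + 4) := by
  classical
  intro u hu
  letI : Algebra k (FractionRing D) :=
    RingHom.toAlgebra ((algebraMap D (FractionRing D)).comp (algebraMap k D))
  let ψ : D →ₐ[k] FractionRing D :=
    { toRingHom := algebraMap D (FractionRing D), commutes' := fun r => rfl }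
  have hψinj : Function.Injective ψ := IsFractionRing.injective D (FractionRing D)
  have hu' : AlgebraicIndependent k (⇑ψ ∘ u) := hu.map' hψinj
  set ξ : Fin (m' + 3) → FractionRing D := fun i => ψ (xb i) with hξ
  set η : Fin (m' + 3) → FractionRing D := fun i => ψ (yb i) with hη
  set v : (Fin (m' + 3) ⊕ Fin (m' + 3)) → FractionRing D := Sum.elim ξ η with hv
  have rel1' : ∀ i j, ξ i * η j = ξ j * η i := by
    intro i j
    rw [hξ, hη, ← map_mul, ← map_mul, rel1]
  have rel2' : ∑ i : Fin (m' + 3), ξ i * η i.rev = 0 := by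
    rw [hξ, hη]
    simp only [← map_mul]
    rw [← map_sum, rel2, map_zero]
  have humem : ∀ j, ψ (u j) ∈ Algebra.adjoin k (Set.range v) := by
    intro j
    obtain ⟨U, hU⟩ := hgen (u j)
    have : ψ (u j) = aeval v U := by
      rw [← hU, comp_aeval_apply]
      have hfun : (fun i => ψ (Sum.elim xb yb i)) = v := by funext s; cases s <;> rfl
      rw [hfun]
    rw [this, Algebra.adjoin_range_eq_range_aeval]
    exact ⟨U, rfl⟩
  have main : ∀ (t : Fin (m' + 3) → FractionRing D) (b : FractionRing D), b ≠ 0 →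
      b ∈ Algebra.adjoin k (Set.range t) →
      (∀ s, ∃ dd : ℕ, b ^ dd * v s ∈ Algebra.adjoin k (Set.range t)) → False := by
    intro t b hb hbA hvmem
    apply not_algIndep_of_gen t b hb hbA (⇑ψ ∘ u) _ hu'
    intro j
    set A := Algebra.adjoin k (Set.range t) with hA
    let L : Subalgebra k (FractionRing D) :=
      { carrier := {z | ∃ dd : ℕ, b ^ dd * z ∈ A}
        mul_mem' := by
          rintro x y ⟨dx, hx⟩ ⟨dy, hy⟩
          exact ⟨dx + dy, by rw [pow_add, show b ^ dx * b ^ dy * (x * y)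
            = (b ^ dx * x) * (b ^ dy * y) by ring]; exact mul_mem hx hy⟩
        add_mem' := by
          rintro x y ⟨dx, hx⟩ ⟨dy, hy⟩
          refine ⟨dx + dy, ?_⟩
          rw [mul_add, pow_add, show b ^ dx * b ^ dy * x = b ^ dy * (b ^ dx * x) by ring,
            show b ^ dx * b ^ dy * y = b ^ dx * (b ^ dy * y) by ring]
          exact add_mem (mul_mem (pow_mem hbA dy) hx) (mul_mem (pow_mem hbA dx) hy)
        algebraMap_mem' := by
          intro c
          exact ⟨0, by rw [pow_zero, one_mul]; exact Subalgebra.algebraMap_mem A c⟩ }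
    have hle : Algebra.adjoin k (Set.range v) ≤ L := by
      apply Algebra.adjoin_le
      rintro _ ⟨s, rfl⟩
      exact hvmem s
    exact hle (humem j)
    -- Case 1: all ξ vanish
  by_cases hx : ∀ i, ξ i = 0
  · apply main η 1 one_ne_zero (one_mem _)
    intro s
    refine ⟨0, ?_⟩
    rw [pow_zero, one_mul]
    cases s with
    | inl i => rw [show v (Sum.inl i) = ξ i from rfl, hx i]; exact zero_mem _
    | inr i => exact Algebra.subset_adjoin ⟨i, rfl⟩
  · push_neg at hx
    obtain ⟨i0, hi0⟩ := hx
    set lam : FractionRing D := η i0 * (ξ i0)⁻¹ with hlamdef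
    have hηlam : ∀ j, η j = lam * ξ j := by
      intro j
      calc η j = (ξ i0)⁻¹ * (ξ i0 * η j) := by
            rw [← mul_assoc, inv_mul_cancel₀ hi0, one_mul]
        _ = (ξ i0)⁻¹ * (ξ j * η i0) := by rw [rel1' i0 j]
        _ = lam * ξ j := by rw [hlamdef]; ring
    by_cases hlam : lam = 0
    · apply main ξ 1 one_ne_zero (one_mem _)
      intro s
      refine ⟨0, ?_⟩
      rw [pow_zero, one_mul]
      cases s with
      | inl i => exact Algebra.subset_adjoin ⟨i, rfl⟩
      | inr i =>
        rw [show v (Sum.inr i) = η i from rfl, hηlam i, hlam, zero_mul]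
        exact zero_mem _
    · have hqzero : ∑ i : Fin (m' + 3), ξ i * ξ i.rev = 0 := by
        have h2 : lam * ∑ i : Fin (m' + 3), ξ i * ξ i.rev = 0 := by
          rw [Finset.mul_sum, ← rel2']
          apply Finset.sum_congr rfl
          intro i _
          rw [hηlam i.rev]; ring
        rcases mul_eq_zero.mp h2 with h | h
        · exact absurd h hlam
        · exact h
      by_cases hl : ξ (Fin.last (m' + 2)) = 0
      · -- ξ_last = 0 : use lam and ξ ∘ castSucc as generators
        set t : Fin (m' + 3) → FractionRing D :=
          Fin.cons lam (fun i : Fin (m' + 2) => ξ i.castSucc) with ht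
        have hξmem : ∀ i, ξ i ∈ Algebra.adjoin k (Set.range t) := by
          intro i
          rcases Fin.eq_castSucc_or_eq_last i with ⟨j, rfl⟩ | rfl
          · exact Algebra.subset_adjoin ⟨j.succ, by rw [ht, Fin.cons_succ]⟩
          · rw [hl]; exact zero_mem _
        apply main t 1 one_ne_zero (one_mem _)
        intro s
        refine ⟨0, ?_⟩
        rw [pow_zero, one_mul]
        cases s with
        | inl i => exact hξmem i
        | inr i =>
          rw [show v (Sum.inr i) = η i from rfl, hηlam i]
          exact mul_mem (Algebra.subset_adjoin ⟨0, by rw [ht, Fin.cons_zero]⟩) (hξmem i)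
      · -- generic case : use lam and ξ ∘ succ as generators, with denominator 2 ξ_last
        set t : Fin (m' + 3) → FractionRing D :=
          Fin.cons lam (fun i : Fin (m' + 2) => ξ i.succ) with ht
        have hlam_mem : lam ∈ Algebra.adjoin k (Set.range t) :=
          Algebra.subset_adjoin ⟨0, by rw [ht, Fin.cons_zero]⟩
        have hξsucc_mem : ∀ i : Fin (m' + 3), i ≠ 0 →
            ξ i ∈ Algebra.adjoin k (Set.range t) := by
          intro i hi
          obtain ⟨j, rfl⟩ := Fin.exists_succ_eq_of_ne_zero hi
          exact Algebra.subset_adjoin ⟨j.succ, by rw [ht, Fin.cons_succ]⟩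
        have h2alg : algebraMap k (FractionRing D) 2 = 2 := map_ofNat _ 2
        have h2F : (2 : FractionRing D) ≠ 0 := by
          intro h
          apply hchar
          apply (algebraMap k (FractionRing D)).injective
          rw [h2alg, h, map_zero]
        set b : FractionRing D := 2 * ξ (Fin.last (m' + 2)) with hbdef
        have hbne : b ≠ 0 := mul_ne_zero h2F hl
        have hlast_ne : (Fin.last (m' + 2) : Fin (m' + 3)) ≠ 0 := by
          simp [Fin.ext_iff]
        have hlast_mem : ξ (Fin.last (m' + 2)) ∈ Algebra.adjoin k (Set.range t) :=
          hξsucc_mem _ hlast_ne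
        have hbmem : b ∈ Algebra.adjoin k (Set.range t) := by
          rw [hbdef]
          refine mul_mem ?_ hlast_mem
          rw [← h2alg]
          exact Subalgebra.algebraMap_mem _ _
        -- split the quadratic relation to solve for ξ 0
        have hsplit : b * ξ 0
            = -(∑ i : Fin (m' + 1), ξ (i.castSucc.succ) * ξ ((i.castSucc.succ).rev)) := by
          have h3 := hqzero
          rw [Fin.sum_univ_succ, Fin.sum_univ_castSucc] at h3
          have hlastsucc : (Fin.last (m' + 1)).succ = Fin.last (m' + 2) := by
            simp [Fin.ext_iff]
          rw [hlastsucc, Fin.rev_zero, Fin.rev_last] at h3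
          rw [hbdef]
          -- h3 : ξ 0 * ξ last + (Σ + ξ last * ξ 0) = 0
          linear_combination h3
        have hM : (∑ i : Fin (m' + 1), ξ (i.castSucc.succ) * ξ ((i.castSucc.succ).rev))
            ∈ Algebra.adjoin k (Set.range t) := by
          apply Subalgebra.sum_mem
          intro i _
          have h1 : (i.castSucc.succ : Fin (m' + 3)) ≠ 0 := Fin.succ_ne_zero _
          have h2 : ((i.castSucc.succ : Fin (m' + 3)).rev) ≠ 0 := by
            rw [Fin.rev_succ]
            intro h
            rw [Fin.castSucc_eq_zero_iff] at h
            have := Fin.rev_injective (h.trans (Fin.rev_last (m' + 1)).symm)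
            exact absurd this (Fin.castSucc_lt_last i).ne
          exact mul_mem (hξsucc_mem _ h1) (hξsucc_mem _ h2)
        have hξL : ∀ i, ∃ dd : ℕ, b ^ dd * ξ i ∈ Algebra.adjoin k (Set.range t) := by
          intro i
          by_cases hi : i = 0
          · refine ⟨1, ?_⟩
            rw [pow_one, hi, hsplit]
            exact neg_mem hM
          · exact ⟨0, by rw [pow_zero, one_mul]; exact hξsucc_mem i hi⟩
        apply main t b hbne hbmem
        intro s
        cases s with
        | inl i => exact hξL i
        | inr i =>
          obtain ⟨dd, hdd⟩ := hξL i
          refine ⟨dd, ?_⟩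
          rw [show v (Sum.inr i) = η i from rfl, hηlam i,
            show b ^ dd * (lam * ξ i) = lam * (b ^ dd * ξ i) by ring]
          exact mul_mem hlam_mem hdd


/-- Evaluation homomorphism sending all `x`-variables to `0` and the first `j`
`y`-variables to `0`. -/
noncomputable def lowerHom (k : Type*) [Field k] (m : ℕ) (j : Fin (m + 1)) :
    MvPolynomial (Fin m ⊕ Fin m) k →ₐ[k] MvPolynomial (Fin m) k :=
  aeval (Sum.elim (fun _ => 0) (fun i => if (j : ℕ) ≤ (i : ℕ) then X i else 0))

lemma specialChartIdeal_le_ker (m : ℕ) (j : Fin (m + 1)) :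
    specialChartIdeal k m ≤ RingHom.ker (lowerHom k m j) := by
  rw [specialChartIdeal, Ideal.span_le]
  rintro z (⟨i, j', hij, rfl⟩ | rfl)
  · simp only [SetLike.mem_coe, RingHom.mem_ker, map_sub, map_mul, xVar, yVar, lowerHom,
      aeval_X, Sum.elim_inl, Sum.elim_inr]
    ring
  · simp only [SetLike.mem_coe, RingHom.mem_ker, map_sum, map_mul, xVar, yVar, lowerHom,
      aeval_X, Sum.elim_inl, Sum.elim_inr]
    simp

lemma ker_lowerHom_mono (m : ℕ) (i : Fin m) :
    RingHom.ker (lowerHom k m i.castSucc) < RingHom.ker (lowerHom k m i.succ) := by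
  rw [SetLike.lt_iff_le_and_exists]
  constructor
  · -- factor through one more specialization
    intro z hz
    set h : MvPolynomial (Fin m) k →ₐ[k] MvPolynomial (Fin m) k :=
      aeval (fun i' : Fin m => if (i.succ : ℕ) ≤ (i' : ℕ) then X i' else 0) with hh
    have hfact : (h.comp (lowerHom k m i.castSucc)) = lowerHom k m i.succ := by
      apply MvPolynomial.algHom_ext
      intro s
      cases s with
      | inl a => simp [lowerHom, hh]
      | inr a =>
        simp only [lowerHom, AlgHom.coe_comp, Function.comp_apply, aeval_X, Sum.elim_inr, hh]
        by_cases h1 : (i.castSucc : ℕ) ≤ (a : ℕ)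
        · rw [if_pos h1, aeval_X]
        · have hcase : ¬ (i.succ : ℕ) ≤ (a : ℕ) := by
            rw [Fin.val_succ]; rw [Fin.coe_castSucc] at h1; omega
          rw [if_neg h1, if_neg hcase, map_zero]
    rw [RingHom.mem_ker] at hz ⊢
    rw [← hfact]
    simp only [AlgHom.coe_comp, Function.comp_apply, hz, map_zero]
  · refine ⟨X (Sum.inr i), ?_, ?_⟩
    · rw [RingHom.mem_ker]
      simp [lowerHom]
    · rw [RingHom.mem_ker]
      simp only [lowerHom, aeval_X, Sum.elim_inr, Fin.coe_castSucc, le_refl, if_true]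
      exact X_ne_zero i

set_option synthInstance.maxHeartbeats 400000 in
lemma key_noIndep (hchar : (2 : k) ≠ 0) {m' : ℕ}
    (p : Ideal (MvPolynomial (Fin (m' + 3) ⊕ Fin (m' + 3)) k)) [hp : p.IsPrime]
    (hIp : specialChartIdeal k (m' + 3) ≤ p) :
    NoIndep k (MvPolynomial (Fin (m' + 3) ⊕ Fin (m' + 3)) k ⧸ p) (m' + 4) := by
  haveI : IsDomain (MvPolynomial (Fin (m' + 3) ⊕ Fin (m' + 3)) k ⧸ p) :=
    Ideal.Quotient.isDomain p
  have hzero : ∀ z ∈ specialChartIdeal k (m' + 3), Ideal.Quotient.mk p z = 0 :=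
    fun z hz => Ideal.Quotient.eq_zero_iff_mem.mpr (hIp hz)
  apply key_aux hchar (fun i => Ideal.Quotient.mk p (xVar k i))
      (fun i => Ideal.Quotient.mk p (yVar k i))
  · intro z
    obtain ⟨U, rfl⟩ := Ideal.Quotient.mk_surjective z
    refine ⟨U, ?_⟩
    have hfun : Sum.elim (fun i => Ideal.Quotient.mk p (xVar k i))
        (fun i => Ideal.Quotient.mk p (yVar k i))
        = fun s => Ideal.Quotient.mkₐ k p (X s) := by
      funext s; cases s <;> rfl
    rw [hfun, ← comp_aeval_apply, aeval_X_left_apply]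
    rfl
  · intro i j
    rcases lt_trichotomy i j with h | h | h
    · have h0 := hzero _ (Ideal.subset_span (Set.mem_union_left _ ⟨i, j, h, rfl⟩))
      rw [RingHom.map_sub, RingHom.map_mul, RingHom.map_mul, sub_eq_zero] at h0
      exact h0
    · rw [h]
    · have h0 := hzero _ (Ideal.subset_span (Set.mem_union_left _ ⟨j, i, h, rfl⟩))
      rw [RingHom.map_sub, RingHom.map_mul, RingHom.map_mul, sub_eq_zero] at h0
      exact h0.symm
  · have h0 := hzero _ (Ideal.subset_span
      (Set.mem_union_right _ (Set.mem_singleton _)))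
    rw [map_sum (Ideal.Quotient.mk p)] at h0
    simpa only [RingHom.map_mul] using h0

set_option synthInstance.maxHeartbeats 400000 in
lemma all_primes_noIndep (hchar : (2 : k) ≠ 0) {m' : ℕ}
    (P : Ideal (MvPolynomial (Fin (m' + 3) ⊕ Fin (m' + 3)) k ⧸ specialChartIdeal k (m' + 3)))
    (hP : P.IsPrime) :
    NoIndep k ((MvPolynomial (Fin (m' + 3) ⊕ Fin (m' + 3)) k ⧸ specialChartIdeal k (m' + 3))
      ⧸ P) (m' + 4) := by
  haveI := hP
  let I : Ideal (MvPolynomial (Fin (m' + 3) ⊕ Fin (m' + 3)) k) := specialChartIdeal k (m' + 3)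
  let p' : Ideal (MvPolynomial (Fin (m' + 3) ⊕ Fin (m' + 3)) k) :=
    Ideal.comap (Ideal.Quotient.mkₐ k I) P
  haveI hp'prime : p'.IsPrime := Ideal.IsPrime.comap _
  have hIp : I ≤ p' := by
    intro z hz
    show Ideal.Quotient.mkₐ k I z ∈ P
    rw [Ideal.Quotient.mkₐ_eq_mk, Ideal.Quotient.eq_zero_iff_mem.mpr hz]
    exact P.zero_mem
  have hkey := key_noIndep hchar p' hIp
  have heq : Ideal.map (Ideal.Quotient.mkₐ k I) p' = P := by
    have h1 : Ideal.map (Ideal.Quotient.mk I) (Ideal.comap (Ideal.Quotient.mk I) P) = P :=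
      Ideal.map_comap_of_surjective _ Ideal.Quotient.mk_surjective P
    exact h1
  have e1 : ((MvPolynomial (Fin (m' + 3) ⊕ Fin (m' + 3)) k ⧸ I)
      ⧸ Ideal.map (Ideal.Quotient.mkₐ k I) p')
      ≃ₐ[k] MvPolynomial (Fin (m' + 3) ⊕ Fin (m' + 3)) k ⧸ p' :=
    DoubleQuot.quotQuotEquivQuotOfLEₐ k hIp
  exact noIndep_of_algEquiv ((e1.symm).trans (Ideal.quotientEquivAlgOfEq k heq)) hkey

end Auxiliary

set_option synthInstance.maxHeartbeats 400000 in
set_option maxHeartbeats 800000 in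
/-- The special fiber of the chart has Krull dimension `m`. -/
theorem specialChart_dim (k : Type*) [Field k] (hchar : (2 : k) ≠ 0)
    (m : ℕ) (hm : 3 ≤ m) :
    ringKrullDim (MvPolynomial (Fin m ⊕ Fin m) k ⧸ specialChartIdeal k m) = m := by

  classical
  obtain ⟨m', rfl⟩ : ∃ m', m = m' + 3 := ⟨m - 3, by omega⟩
  apply le_antisymm
  · exact ringKrullDim_le_of_noIndep (k := k) (m' + 3)
      (fun P hP => all_primes_noIndep hchar P hP)
  · -- lower bound via an explicit chain of primes
    haveI : ∀ j : Fin (m' + 3 + 1),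
        (RingHom.ker (lowerHom k (m' + 3) j)).IsPrime :=
      fun j => RingHom.ker_isPrime _
    set Q : Fin (m' + 3 + 1) →
        Ideal (MvPolynomial (Fin (m' + 3) ⊕ Fin (m' + 3)) k ⧸ specialChartIdeal k (m' + 3)) :=
      fun j => (RingHom.ker (lowerHom k (m' + 3) j)).map
        (Ideal.Quotient.mk (specialChartIdeal k (m' + 3))) with hQ
    have hker : RingHom.ker (Ideal.Quotient.mk (specialChartIdeal k (m' + 3)))
        = specialChartIdeal k (m' + 3) := Ideal.mk_ker
    have hQprime : ∀ j, (Q j).IsPrime := by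
      intro j
      apply Ideal.map_isPrime_of_surjective Ideal.Quotient.mk_surjective
      rw [hker]
      exact specialChartIdeal_le_ker _ _
    have hQstep : ∀ i : Fin (m' + 3), Q i.castSucc < Q i.succ := by
      intro i
      obtain ⟨hle, w, hw1, hw2⟩ :=
        SetLike.lt_iff_le_and_exists.mp (ker_lowerHom_mono (k := k) (m' + 3) i)
      rw [SetLike.lt_iff_le_and_exists]
      refine ⟨Ideal.map_mono hle, Ideal.Quotient.mk _ w, Ideal.mem_map_of_mem _ hw1, ?_⟩
      intro hmem
      have hw : w ∈ Ideal.comap (Ideal.Quotient.mk (specialChartIdeal k (m' + 3)))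
          (Q i.castSucc) := hmem
      rw [hQ, Ideal.comap_map_of_surjective _ Ideal.Quotient.mk_surjective] at hw
      have hbot : Ideal.comap (Ideal.Quotient.mk (specialChartIdeal k (m' + 3)))
          (⊥ : Ideal _) = specialChartIdeal k (m' + 3) := by
        rw [← RingHom.ker_eq_comap_bot, hker]
      rw [hbot] at hw
      have : w ∈ RingHom.ker (lowerHom k (m' + 3) i.castSucc) := by
        have hsub : RingHom.ker (lowerHom k (m' + 3) i.castSucc)
            ⊔ specialChartIdeal k (m' + 3) = RingHom.ker (lowerHom k (m' + 3) i.castSucc) :=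
          sup_eq_left.mpr (specialChartIdeal_le_ker _ _)
        rw [hsub] at hw
        exact hw
      exact hw2 this
    set c : LTSeries (PrimeSpectrum
        (MvPolynomial (Fin (m' + 3) ⊕ Fin (m' + 3)) k ⧸ specialChartIdeal k (m' + 3))) :=
      ⟨m' + 3, fun j => ⟨Q j, hQprime j⟩, fun i => hQstep i⟩ with hc
    have hlen := Order.LTSeries.length_le_krullDim c
    have hclen : c.length = m' + 3 := rfl
    rw [hclen] at hlen
    exact_mod_cast hlen
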